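/- With the recursion R_k = −k/n and R_{j+1} = ρ_{j+1} R_j + (ρ_{j+1} − 1)·(j+1)/n where ρ_j ≥ 1 are integers and n ≥ 1: if R_j ≥ −j/n then R_{j+1} ≥ −j/n > −(j+1)/n; hence by induction R_j ≥ −k/n > −j/n for all j > k, so R_j ≠ −m/n for every integer m > j. -/
import Mathlib


/-- Differential-case residue argument: the residues stay ≥ -k/n > -j/n, hence
    never equal -m/n for m > j. -/
theorem residue_differential_case (n k : ℕ) (hn : 1 ≤ n) (hk : 1 ≤ k)
    (ρ : ℕ → ℕ) (hρ : ∀ j, 1 ≤ ρ j) (R : ℕ → ℝ)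
    (hbase : R k = -(k : ℝ) / n)
    (hrec : ∀ j, k ≤ j →
      R (j + 1) = (ρ (j + 1) : ℝ) * R j + ((ρ (j + 1) : ℝ) - 1) * (j + 1) / n) :
    ∀ j, k < j →
      R j ≥ -(k : ℝ) / n ∧ R j > -(j : ℝ) / n ∧
        ∀ m : ℕ, j < m → R j ≠ -(m : ℝ) / n := by
  have hn' : (0 : ℝ) < n := by exact_mod_cast hn
  have key : ∀ j, k ≤ j → R j ≥ -(k : ℝ) / n := by
    intro j hj
    induction j, hj using Nat.le_induction with
    | base => rw [hbase]
    | succ j hj ih =>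
      rw [hrec j hj]
      have hρ1 : (1 : ℝ) ≤ (ρ (j + 1) : ℝ) := by exact_mod_cast hρ (j + 1)
      have hjk : (k : ℝ) ≤ (j : ℝ) + 1 := by
        have : k ≤ j + 1 := hj.trans (Nat.le_succ j)
        exact_mod_cast this
      have h1 : (ρ (j + 1) : ℝ) * (-(k : ℝ) / n) ≤ (ρ (j + 1) : ℝ) * R j :=
        mul_le_mul_of_nonneg_left ih (by linarith)
      have h2 : (0 : ℝ) ≤ ((ρ (j + 1) : ℝ) - 1) * (j + 1) / n := by
        apply div_nonneg _ hn'.le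
        apply mul_nonneg (by linarith)
        positivity
      have h3 : -(k : ℝ) / n ≤ (ρ (j + 1) : ℝ) * (-(k : ℝ) / n)
          + ((ρ (j + 1) : ℝ) - 1) * (j + 1) / n := by
        have e : (ρ (j + 1) : ℝ) * (-(k : ℝ) / n) + ((ρ (j + 1) : ℝ) - 1) * (j + 1) / n
            = ((ρ (j + 1) : ℝ) * (-(k : ℝ)) + ((ρ (j + 1) : ℝ) - 1) * ((j : ℝ) + 1)) / n := by
          ring
        rw [e, div_le_div_iff₀ hn' hn']
        nlinarith [mul_le_mul_of_nonneg_left hjk (by linarith : (0:ℝ) ≤ (ρ (j+1):ℝ) - 1)]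
      linarith
  intro j hjgt
  have hge := key j hjgt.le
  have hkj : (k : ℝ) < (j : ℝ) := by exact_mod_cast hjgt
  have hgt : R j > -(j : ℝ) / n := by
    have : -(j : ℝ) / n < -(k : ℝ) / n := by
      apply div_lt_div_of_pos_right _ hn' <;> linarith
    linarith
  refine ⟨hge, hgt, ?_⟩
  intro m hm heq
  have hjm : (j : ℝ) < (m : ℝ) := by exact_mod_cast hm
  have : -(m : ℝ) / n < -(j : ℝ) / n := by
    apply div_lt_div_of_pos_right _ hn'; linarith
  rw [heq] at hgt; linarith
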